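/- For every real m > 0 and x ≥ 0, φ_m(x) = ψ(m) − ∑_{k=1}^∞ (−x)^k / (k · m(m+1)⋯(m+k−1)), where the series converges absolutely. -/

import Mathlib

open Real MeasureTheory Filter ProbabilityTheory

/-- The digamma function psi(x) = Gamma'(x)/Gamma(x). -/
noncomputable def psi (x : ℝ) : ℝ := deriv Real.Gamma x / Real.Gamma x

/-- phi_m(x) = e^{-x} * sum_j (x^j/j!) psi(j+m). -/
noncomputable def phi (m x : ℝ) : ℝ :=
  Real.exp (-x) * ∑' j : ℕ, x ^ j / (Nat.factorial j : ℝ) * psi (j + m)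

lemma psi_add_one {y : ℝ} (hy : 0 < y) : psi (y + 1) = psi y + 1 / y := by
  have hdiff : ∀ z : ℝ, 0 < z → DifferentiableAt ℝ Real.Gamma z := by
    intro z hz
    exact Real.differentiableAt_Gamma (fun n => ((neg_nonpos.mpr (Nat.cast_nonneg n)).trans_lt hz).ne')
  have hEq : (fun z : ℝ => Real.Gamma (z + 1)) =ᶠ[nhds y] (fun z => z * Real.Gamma z) := by
    filter_upwards [eventually_gt_nhds hy] with z hz
    exact Real.Gamma_add_one (ne_of_gt hz)
  have h1 : deriv (fun z : ℝ => Real.Gamma (z + 1)) y = deriv Real.Gamma (y + 1) := by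
    simpa using deriv_comp_add_const Real.Gamma 1 y
  have h2 : deriv (fun z : ℝ => z * Real.Gamma z) y
      = Real.Gamma y + y * deriv Real.Gamma y := by
    rw [deriv_fun_mul (c := fun z => z) differentiableAt_id (hdiff y hy)]
    simp [mul_comm]
  have h3 : deriv Real.Gamma (y + 1) = Real.Gamma y + y * deriv Real.Gamma y := by
    rw [← h1, hEq.deriv_eq, h2]
  have hGy : Real.Gamma y ≠ 0 := (Real.Gamma_pos_of_pos hy).ne'
  have hyne : y ≠ 0 := hy.ne'
  rw [psi, psi, h3, Real.Gamma_add_one hyne]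
  field_simp
  ring

lemma psi_nat_add {m : ℝ} (hm : 0 < m) (j : ℕ) :
    psi (j + m) = psi m + ∑ i ∈ Finset.range j, 1 / (m + i) := by
  induction j with
  | zero => simp
  | succ n ih =>
    have h1 : ((n + 1 : ℕ) : ℝ) + m = (n + m) + 1 := by push_cast; ring
    have hpos : (0:ℝ) < n + m := by positivity
    rw [h1, psi_add_one hpos, ih, Finset.sum_range_succ, add_comm (m:ℝ) (n:ℝ)]
    ring

lemma sumB : ∀ (n : ℕ) (m : ℝ), 0 < m →
    ∑ j ∈ Finset.range (n + 1), (-1 : ℝ) ^ j * (n.choose j) / (m + j)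
      = (Nat.factorial n : ℝ) / ∏ i ∈ Finset.range (n + 1), (m + i) := by
  intro n
  induction n with
  | zero => intro m hm; simp
  | succ n ih =>
    intro m hm
    have hm1 : (0:ℝ) < m + 1 := by linarith
    set T1 : ℕ → ℝ := fun j => (-1:ℝ)^j * (n.choose j) / ((m+1) + j) with hT1
    set T2 : ℕ → ℝ := fun j => (-1:ℝ)^j * (n.choose (j+1)) / (m + (j+1)) with hT2
    have step1 : ∑ j ∈ Finset.range (n + 2), (-1 : ℝ) ^ j * ((n+1).choose j) / (m + j)
        = (∑ j ∈ Finset.range (n + 1), (-1:ℝ)^j * (n.choose j) / (m + j))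
          - ∑ j ∈ Finset.range (n + 1), (-1:ℝ)^j * (n.choose j) / ((m+1) + j) := by
      rw [Finset.sum_range_succ'
        (fun j => (-1 : ℝ) ^ j * ((n+1).choose j) / (m + j))]
      have hgsucc : ∀ j ∈ Finset.range (n+1),
          (-1 : ℝ) ^ (j+1) * ((n+1).choose (j+1)) / (m + (j+1:ℕ))
            = -T1 j + -T2 j := by
        intro j _
        rw [hT1, hT2]
        simp only [Nat.choose_succ_succ]
        push_cast
        have h1 : (0:ℝ) < m + (j+1) := by positivity
        field_simp
        ring
      rw [Finset.sum_congr rfl hgsucc, Finset.sum_add_distrib,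
        Finset.sum_neg_distrib, Finset.sum_neg_distrib]
      have hlast : ∑ j ∈ Finset.range (n+1), T2 j = ∑ j ∈ Finset.range n, T2 j := by
        rw [Finset.sum_range_succ, hT2]
        simp
      have hB : ∑ j ∈ Finset.range (n + 1), (-1:ℝ)^j * (n.choose j) / (m + j)
          = (-1:ℝ)^(0:ℕ) * ((n+1).choose 0) / (m + (0:ℕ))
            - ∑ j ∈ Finset.range n, T2 j := by
        rw [Finset.sum_range_succ' (fun j => (-1:ℝ)^j * (n.choose j) / (m + j))]
        have hterm : ∀ k ∈ Finset.range n,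
            (-1:ℝ)^(k+1) * (n.choose (k+1)) / (m + (k+1:ℕ)) = -T2 k := by
          intro k _
          rw [hT2]; push_cast; ring
        rw [Finset.sum_congr rfl hterm, Finset.sum_neg_distrib]
        simp only [Nat.choose_zero_right, pow_zero, Nat.cast_zero, Nat.cast_one,
          add_zero, one_mul]
        ring
      rw [hlast, hB]
      ring
    have hprod : ∀ k : ℕ, (0:ℝ) < ∏ i ∈ Finset.range k, (m + i) := by
      intro k
      apply Finset.prod_pos
      intro i _
      positivity
    have hprod1 : ∀ k : ℕ, (0:ℝ) < ∏ i ∈ Finset.range k, ((m+1) + i) := by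
      intro k
      apply Finset.prod_pos
      intro i _
      positivity
    have key1 : ∏ i ∈ Finset.range (n+2), (m + i)
        = (∏ i ∈ Finset.range (n+1), (m + i)) * (m + (n+1)) := by
      rw [Finset.prod_range_succ]; push_cast; ring_nf
    have key2 : ∏ i ∈ Finset.range (n+2), (m + i)
        = m * ∏ i ∈ Finset.range (n+1), ((m+1) + i) := by
      rw [Finset.prod_range_succ' (fun i => m + (i:ℝ))]
      simp only [Nat.cast_zero, add_zero, mul_comm]
      congr 1
      apply Finset.prod_congr rfl
      intro i _
      push_cast; ring
    rw [step1, ih m hm, ih (m+1) hm1, key1]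
    have h2 : (Nat.factorial n : ℝ) / ∏ i ∈ Finset.range (n+1), ((m+1) + i)
        = (Nat.factorial n : ℝ) * m / ∏ i ∈ Finset.range (n+2), (m + i) := by
      rw [key2]
      field_simp
    rw [h2, key1]
    have P := hprod (n+1)
    have hmn : (0:ℝ) < m + (n+1) := by positivity
    rw [Nat.factorial_succ]
    push_cast
    field_simp
    ring

lemma sumA (n : ℕ) (m : ℝ) (hm : 0 < m) :
    ∑ j ∈ Finset.range (n + 2), (-1:ℝ)^j * ((n+1).choose j)
        * (∑ i ∈ Finset.range j, 1/(m+(i:ℝ)))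
      = -((Nat.factorial n : ℝ) / ∏ i ∈ Finset.range (n + 1), (m + i)) := by
  set h : ℕ → ℝ := fun j => ∑ i ∈ Finset.range j, 1/(m+(i:ℝ)) with hh
  have hstep : ∀ k : ℕ, h (k+1) = h k + 1/(m+k) := fun k => Finset.sum_range_succ _ k
  have hA : ∀ N : ℕ, ∑ j ∈ Finset.range (N+1), (-1:ℝ)^j * (N.choose j) * h j
      = ∑ k ∈ Finset.range N, (-1:ℝ)^(k+1) * (N.choose (k+1)) * h (k+1) := by
    intro N
    rw [Finset.sum_range_succ' (fun j => (-1:ℝ)^j * (N.choose j) * h j)]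
    simp [hh]
  have hterm : ∀ k ∈ Finset.range (n+1),
      (-1:ℝ)^(k+1) * (((n+1).choose (k+1) : ℕ) : ℝ) * h (k+1)
        = (-((-1:ℝ)^k * (n.choose k) * h k) + -((-1:ℝ)^k * (n.choose k) / (m+k)))
          + (-1:ℝ)^(k+1) * (n.choose (k+1)) * h (k+1) := by
    intro k _
    rw [Nat.choose_succ_succ, hstep]
    push_cast
    have : (0:ℝ) < m + k := by positivity
    field_simp
    ring
  rw [hA (n+1), Finset.sum_congr rfl hterm, Finset.sum_add_distrib,
    Finset.sum_add_distrib, Finset.sum_neg_distrib, Finset.sum_neg_distrib]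
  have hT : ∑ k ∈ Finset.range (n+1), (-1:ℝ)^(k+1) * (n.choose (k+1)) * h (k+1)
      = ∑ j ∈ Finset.range (n+1), (-1:ℝ)^j * (n.choose j) * h j := by
    rw [Finset.sum_range_succ, hA n]
    simp
  rw [hT, sumB n m hm]
  ring

theorem stmt4 (m : ℝ) (hm : 0 < m) (x : ℝ) (hx : 0 ≤ x) :
    (Summable fun k : ℕ =>
      |(-x) ^ (k + 1) / ((k + 1 : ℝ) * ∏ i ∈ Finset.range (k + 1), (m + i))|) ∧
    phi m x = psi m -
      ∑' k : ℕ, (-x) ^ (k + 1) / ((k + 1 : ℝ) * ∏ i ∈ Finset.range (k + 1), (m + i)) := by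
  set h : ℕ → ℝ := fun j => ∑ i ∈ Finset.range j, 1/(m+(i:ℝ)) with hh
  have hh0 : h 0 = 0 := by simp [hh]
  have hnonneg : ∀ j, 0 ≤ h j := by
    intro j
    apply Finset.sum_nonneg
    intro i _
    positivity
  have hle : ∀ j : ℕ, h j ≤ j / m := by
    intro j
    calc h j ≤ ∑ _i ∈ Finset.range j, 1/m := by
          apply Finset.sum_le_sum
          intro i _
          apply div_le_div_of_nonneg_left one_pos.le hm
          · simp [le_add_iff_nonneg_right]
      _ = j / m := by simp [Finset.sum_const]; ring
  -- summability of the h-weighted series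
  have s2 : Summable fun j : ℕ => x ^ j / (Nat.factorial j : ℝ) * h j := by
    apply Summable.of_nonneg_of_le
      (fun j => by have := hnonneg j; positivity)
      (fun j => ?_)
      (((Real.summable_pow_div_factorial (2*x)).mul_right (1/m)))
    calc x ^ j / (Nat.factorial j : ℝ) * h j
        ≤ x ^ j / (Nat.factorial j : ℝ) * (j / m) := by
          apply mul_le_mul_of_nonneg_left (hle j) (by positivity)
      _ ≤ (2*x) ^ j / (Nat.factorial j : ℝ) * (1/m) := by
          rw [mul_pow]
          rw [div_mul_div_comm, div_mul_div_comm]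
          apply div_le_div_of_nonneg_right ?_ (by positivity)
          · calc x ^ j * j ≤ x ^ j * 2 ^ j := by
                  apply mul_le_mul_of_nonneg_left ?_ (by positivity)
                  exact_mod_cast (Nat.lt_two_pow_self (n := j)).le
              _ = 2 ^ j * x ^ j * 1 := by ring
  have s2norm : Summable fun j : ℕ => ‖x ^ j / (Nat.factorial j : ℝ) * h j‖ := by
    apply s2.congr
    intro j
    rw [Real.norm_of_nonneg (by have := hnonneg j; positivity)]
  have s1norm : Summable fun j : ℕ => ‖(-x) ^ j / (Nat.factorial j : ℝ)‖ := by
    apply (Real.summable_pow_div_factorial x).congr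
    intro j
    rw [norm_div, norm_pow, norm_neg, Real.norm_of_nonneg hx,
      Real.norm_natCast]
  have s0 := Real.summable_pow_div_factorial x
  -- the Cauchy product coefficients
  set c : ℕ → ℝ := fun n => ∑ k ∈ Finset.range (n+1),
    ((-x) ^ k / (Nat.factorial k : ℝ)) * (x ^ (n-k) / (Nat.factorial (n-k) : ℝ) * h (n-k))
    with hc
  have hcsum : Summable c := by
    exact (summable_norm_sum_mul_range_of_summable_norm s1norm s2norm).of_norm
  have hcauchy : Real.exp (-x) * (∑' j : ℕ, x ^ j / (Nat.factorial j : ℝ) * h j)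
      = ∑' n, c n := by
    rw [Real.exp_eq_exp_ℝ, NormedSpace.exp_eq_tsum_div]
    exact tsum_mul_tsum_eq_tsum_sum_range_of_summable_norm s1norm s2norm
  have hprodpos : ∀ k : ℕ, (0:ℝ) < ∏ i ∈ Finset.range (k+1), (m + i) := by
    intro k
    apply Finset.prod_pos
    intro i _
    positivity
  -- identify the coefficients
  have hc0 : c 0 = 0 := by simp [hc, hh0]
  have hcsucc : ∀ N : ℕ, c (N+1)
      = -((-x) ^ (N + 1) / ((N + 1 : ℝ) * ∏ i ∈ Finset.range (N + 1), (m + i))) := by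
    intro N
    have hrefl := Finset.sum_range_reflect
      (fun k => ((-x) ^ k / (Nat.factorial k : ℝ))
        * (x ^ (N+1-k) / (Nat.factorial (N+1-k) : ℝ) * h (N+1-k))) (N+2)
    have hterm : ∀ j ∈ Finset.range (N+2),
        ((-x) ^ (N+2-1-j) / (Nat.factorial (N+2-1-j) : ℝ))
          * (x ^ (N+1-(N+2-1-j)) / (Nat.factorial (N+1-(N+2-1-j)) : ℝ) * h (N+1-(N+2-1-j)))
        = ((-1:ℝ)^(N+1) * x^(N+1) / (Nat.factorial (N+1) : ℝ))
          * ((-1:ℝ)^j * (((N+1).choose j : ℕ) : ℝ) * h j) := by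
      intro j hj
      rw [Finset.mem_range] at hj
      have hjle : j ≤ N + 1 := by omega
      have e1 : N+2-1-j = N+1-j := by omega
      have e2 : N+1-(N+1-j) = j := by omega
      rw [e1, e2]
      have key : ((N+1).factorial : ℝ)
          = ((N+1).choose j : ℝ) * (j.factorial : ℝ) * ((N+1-j).factorial : ℝ) := by
        exact_mod_cast (Nat.choose_mul_factorial_mul_factorial hjle).symm
      have hx1 : x ^ (N+1-j) * x ^ j = x ^ (N+1) := pow_sub_mul_pow x hjle
      have hsign : (-1:ℝ) ^ (N+1-j) * (-1:ℝ) ^ j = (-1:ℝ) ^ (N+1) :=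
        pow_sub_mul_pow (-1:ℝ) hjle
      have ha : ((N+1-j).factorial : ℝ) ≠ 0 := Nat.cast_ne_zero.mpr (Nat.factorial_ne_zero _)
      have hb : (j.factorial : ℝ) ≠ 0 := Nat.cast_ne_zero.mpr (Nat.factorial_ne_zero _)
      have hnn : ((N+1).factorial : ℝ) ≠ 0 := Nat.cast_ne_zero.mpr (Nat.factorial_ne_zero _)
      rw [neg_pow x (N+1-j)]
      field_simp
      rw [key, ← hx1, ← hsign]
      ring_nf
      rw [mul_comm j 2, pow_mul]
      norm_num
    have : c (N+1) = ((-1:ℝ)^(N+1) * x^(N+1) / (Nat.factorial (N+1) : ℝ))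
        * ∑ j ∈ Finset.range (N+2), (-1:ℝ)^j * (((N+1).choose j : ℕ) : ℝ) * h j := by
      simp only [hc]
      rw [← hrefl, Finset.sum_congr rfl hterm, ← Finset.mul_sum]
    rw [this, sumA N m hm]
    have hP := hprodpos N
    have hfac : ((N+1).factorial : ℝ) = (N+1) * (N.factorial : ℝ) := by
      exact_mod_cast Nat.factorial_succ N
    rw [neg_pow x (N+1), hfac]
    have hNf : (N.factorial : ℝ) ≠ 0 := Nat.cast_ne_zero.mpr (Nat.factorial_ne_zero _)
    field_simp
  -- summability of the target series
  have htgt : Summable fun k : ℕ =>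
      (-x) ^ (k + 1) / ((k + 1 : ℝ) * ∏ i ∈ Finset.range (k + 1), (m + i)) := by
    have := (summable_nat_add_iff 1).mpr hcsum
    apply Summable.neg at this
    apply this.congr
    intro k
    rw [hcsucc k]
    ring
  refine ⟨htgt.abs, ?_⟩
  -- final assembly
  have hpsisum : ∀ j : ℕ, x ^ j / (Nat.factorial j : ℝ) * psi (j + m)
      = x ^ j / (Nat.factorial j : ℝ) * psi m + x ^ j / (Nat.factorial j : ℝ) * h j := by
    intro j
    rw [psi_nat_add hm j]
    ring
  have hsplit : (∑' j : ℕ, x ^ j / (Nat.factorial j : ℝ) * psi (j + m))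
      = Real.exp x * psi m + ∑' j : ℕ, x ^ j / (Nat.factorial j : ℝ) * h j := by
    rw [tsum_congr hpsisum, Summable.tsum_add (s0.mul_right _) s2, tsum_mul_right]
    congr 1
    rw [Real.exp_eq_exp_ℝ, NormedSpace.exp_eq_tsum_div]
  rw [phi, hsplit, mul_add, ← mul_assoc, ← Real.exp_add, hcauchy]
  have htsum : ∑' n, c n = -∑' k : ℕ,
      (-x) ^ (k + 1) / ((k + 1 : ℝ) * ∏ i ∈ Finset.range (k + 1), (m + i)) := by
    rw [Summable.tsum_eq_zero_add hcsum, hc0, zero_add, ← tsum_neg]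
    exact tsum_congr fun N => hcsucc N
  rw [htsum]
  simp
  ring
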